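/- arXiv:1702.01543 — 4 statements merged into one kernel-verified Lean document; each statement's English description precedes it below -/
import Mathlib

section
/- Let d and t be positive integers and let h_1, …, h_t ∈ ℝ^d be such that the additive subgroup h_1ℤ + h_2ℤ + ⋯ + h_tℤ is dense in ℝ^d. Let f : ℝ^d → ℂ be continuous and suppose there exist natural numbers m_1, …, m_t such that for every k = 1, …, t the function Δ_{h_k}^{m_k} f belongs to some finite-dimensional translation-invariant linear subspace of C(ℝ^d, ℂ). Then f belongs to a finite-dimensional translation-invariant linear subspace of C(ℝ^d, ℂ). -/
/-- Forward difference operator: `(fd h f) x = f (x + h) - f x`. -/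
def fd {α : Type*} [Add α] (h : α) (f : α → ℂ) : α → ℂ := fun x => f (x + h) - f x

namespace Stmt5Aux

variable {α : Type*} [AddCommGroup α]

/-- Translation operator as a linear map. -/
noncomputable def L (y : α) : Module.End ℂ (α → ℂ) :=
  { toFun := fun g => fun x => g (x + y)
    map_add' := fun _ _ => rfl
    map_smul' := fun _ _ => rfl }

lemma L_apply (y : α) (g : α → ℂ) (x : α) : L y g x = g (x + y) := rfl

noncomputable def fdL (y : α) : Module.End ℂ (α → ℂ) := L y - 1

lemma fdL_apply (y : α) (g : α → ℂ) : fdL y g = fd y g := rfl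

lemma L_comm (y z : α) : Commute (L y) (L z) := by
  ext g x
  simp [Module.End.mul_apply, L_apply, add_assoc, add_comm, add_left_comm]

lemma L_fdL_comm (y z : α) : Commute (L y) (fdL z) :=
  (L_comm y z).sub_right (Commute.one_right _)

lemma fdL_comm (y z : α) : Commute (fdL y) (fdL z) :=
  ((L_comm y z).sub_left (Commute.one_left _)).sub_right
    ((Commute.one_right _).sub_left (Commute.one_left _))

lemma iterate_fd (y : α) (m : ℕ) (f : α → ℂ) :
    (fd y)^[m] f = ((fdL y) ^ m) f := by
  induction m with
  | zero => rfl
  | succ n ih =>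
      rw [Function.iterate_succ_apply', ih, pow_succ', Module.End.mul_apply, fdL_apply]

variable {H : Submodule ℂ (α → ℂ)}

/-- stability of a submodule under all translations -/
def Stab (H : Submodule ℂ (α → ℂ)) : Prop := ∀ (y : α), ∀ g ∈ H, L y g ∈ H

lemma Stab.fdL_mem (hH : Stab H) (y : α) {g : α → ℂ} (hg : g ∈ H) : fdL y g ∈ H := by
  have : fdL y g = L y g - g := rfl
  rw [this]
  exact sub_mem (hH y g hg) hg

lemma Stab.fdL_pow_mem (hH : Stab H) (y : α) (n : ℕ) {g : α → ℂ} (hg : g ∈ H) :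
    ((fdL y) ^ n) g ∈ H := by
  induction n with
  | zero => simpa using hg
  | succ n ih =>
      rw [pow_succ', Module.End.mul_apply]
      exact hH.fdL_mem y ih

/-- All finite iterated differences of `f`. -/
def Eset (f : α → ℂ) : Set (α → ℂ) :=
  {g | ∃ l : List α, g = l.foldr (fun y u => fdL y u) f}

noncomputable def F (f : α → ℂ) : Submodule ℂ (α → ℂ) := Submodule.span ℂ (Eset f)

lemma mem_F_self (f : α → ℂ) : f ∈ F f := Submodule.subset_span ⟨[], rfl⟩

lemma F_map_fdL_le (f : α → ℂ) (y : α) : (F f).map (fdL y) ≤ F f := by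
  rw [F, Submodule.map_span, Submodule.span_le]
  rintro _ ⟨g, ⟨l, rfl⟩, rfl⟩
  exact Submodule.subset_span ⟨y :: l, rfl⟩

lemma F_map_fdL_pow_le (f : α → ℂ) (y : α) (n : ℕ) : (F f).map ((fdL y) ^ n) ≤ F f := by
  induction n with
  | zero => rw [pow_zero]; rintro g ⟨u, hu, rfl⟩; exact hu
  | succ n ih =>
      rw [pow_succ, Module.End.mul_eq_comp, Submodule.map_comp]
      exact le_trans (Submodule.map_mono (F_map_fdL_le f y)) ih

lemma foldr_mem (hH : Stab H) (l : List α) {g : α → ℂ} (hg : g ∈ H) :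
    l.foldr (fun y u => fdL y u) g ∈ H := by
  induction l with
  | nil => exact hg
  | cons y l ih => exact hH.fdL_mem y ih

lemma pow_foldr_comm (y : α) (n : ℕ) (l : List α) (f : α → ℂ) :
    ((fdL y) ^ n) (l.foldr (fun z u => fdL z u) f) =
      l.foldr (fun z u => fdL z u) (((fdL y) ^ n) f) := by
  induction l with
  | nil => rfl
  | cons z l ih =>
      have hc : Commute ((fdL y) ^ n) (fdL z) := ((fdL_comm y z).pow_left n)
      calc ((fdL y) ^ n) (fdL z (l.foldr (fun z u => fdL z u) f))
          = (((fdL y) ^ n) * fdL z) (l.foldr (fun z u => fdL z u) f) := rfl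
        _ = (fdL z * ((fdL y) ^ n)) (l.foldr (fun z u => fdL z u) f) := by rw [hc]
        _ = fdL z (l.foldr (fun z u => fdL z u) (((fdL y) ^ n) f)) := by
            rw [Module.End.mul_apply, ih]

lemma F_map_pow_le_H (hH : Stab H) {f : α → ℂ} {y : α} {n : ℕ}
    (hfn : ((fdL y) ^ n) f ∈ H) : (F f).map ((fdL y) ^ n) ≤ H := by
  rw [F, Submodule.map_span, Submodule.span_le]
  rintro _ ⟨g, ⟨l, rfl⟩, rfl⟩
  simpa [pow_foldr_comm] using foldr_mem hH l hfn

set_option maxHeartbeats 1000000 in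
lemma pow_succ_apply (T : Module.End ℂ (α → ℂ)) (n : ℕ) (u : α → ℂ) :
    (T ^ (n + 1)) u = T ((T ^ n) u) := by
  rw [pow_succ', Module.End.mul_apply]

lemma aux (t : ℕ) (h : Fin t → α) (m : Fin t → ℕ) (f : α → ℂ)
    (H : Submodule ℂ (α → ℂ)) (hFD : FiniteDimensional ℂ H) (hH : Stab H)
    (hm : ∀ k, ((fdL (h k)) ^ (m k)) f ∈ H) :
    ∃ U : Submodule ℂ (α → ℂ), FiniteDimensional ℂ U ∧ H ≤ U ∧ U ≤ H ⊔ F f ∧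
      f ∈ U ∧ ∀ k, U.map (L (h k)) ≤ U := by
  induction t with
  | zero =>

      refine ⟨H ⊔ Submodule.span ℂ {f}, ?_, le_sup_left, ?_, ?_, fun k => k.elim0⟩
      · infer_instance
      · refine sup_le_sup_left ?_ H
        rw [Submodule.span_le, Set.singleton_subset_iff]
        exact mem_F_self f
      · exact Submodule.mem_sup_right (Submodule.mem_span_singleton_self f)
  | succ t ih =>

      obtain ⟨U, hUFD, hHU, hUle, hfU, hUinv⟩ :=
        ih (fun k => h k.castSucc) (fun k => m k.castSucc) (fun k => hm k.castSucc)
      set a := h (Fin.last t) with ha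
      set n := m (Fin.last t) with hn
      -- the new space
      set U' : Submodule ℂ (α → ℂ) :=
        H ⊔ ⨆ j : Fin n, U.map ((fdL a) ^ (j : ℕ)) with hU'
      have hcomp : ∀ j : Fin n, U.map ((fdL a) ^ (j : ℕ)) ≤ U' := fun j =>
        le_trans (le_iSup (fun j : Fin n => U.map ((fdL a) ^ (j : ℕ))) j) le_sup_right
      have hHU' : H ≤ U' := le_sup_left
      -- fdL a ^ n maps U into H
      have hpowU : ∀ u ∈ U, ((fdL a) ^ n) u ∈ H := by
        intro u hu
        obtain ⟨v, hv, w, hw, rfl⟩ := Submodule.mem_sup.1 (hUle hu)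
        rw [map_add]
        exact add_mem (hH.fdL_pow_mem a n hv)
          (F_map_pow_le_H hH (hm (Fin.last t)) ⟨w, hw, rfl⟩)
      refine ⟨U', ?_, hHU', ?_, ?_, ?_⟩
      · -- finite dimensional
        have : ∀ j : Fin n, FiniteDimensional ℂ (U.map ((fdL a) ^ (j : ℕ))) :=
          fun j => Module.Finite.map _ _
        infer_instance
      · -- U' ≤ H ⊔ F f
        refine sup_le le_sup_left (iSup_le fun j => ?_)
        calc U.map ((fdL a) ^ (j : ℕ)) ≤ (H ⊔ F f).map ((fdL a) ^ (j : ℕ)) :=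
              Submodule.map_mono hUle
          _ ≤ H ⊔ F f := by
              rw [Submodule.map_sup]
              exact sup_le
                (le_trans (fun g hg => by
                  obtain ⟨u, hu, rfl⟩ := hg
                  exact hH.fdL_pow_mem a _ hu) le_sup_left)
                (le_trans (F_map_fdL_pow_le f a _) le_sup_right)
      · -- f ∈ U'
        rcases Nat.eq_zero_or_pos n with h0 | hpos
        · have := hm (Fin.last t)
          rw [← hn, h0, pow_zero] at this
          exact hHU' this
        · have : f ∈ U.map ((fdL a) ^ ((⟨0, hpos⟩ : Fin n) : ℕ)) := by
            exact ⟨f, hfU, by simp⟩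
          exact hcomp ⟨0, hpos⟩ this
      · -- invariance
        intro k
        rintro _ ⟨g, hg, rfl⟩
        obtain ⟨v, hv, w, hw, rfl⟩ := Submodule.mem_sup.1 hg
        rw [map_add]
        refine add_mem (hHU' (hH _ _ hv)) ?_
        -- w is in the iSup
        clear hg hv
        induction k using Fin.lastCases with
        | last =>
            -- L a = 1 + fdL a pointwise
            have hLa : L a w = w + fdL a w := by
              have : fdL a w = L a w - w := rfl
              rw [this]; abel
            rw [hLa]
            refine add_mem (Submodule.mem_sup_right hw) ?_
            -- show fdL a maps the iSup into U'
            refine Submodule.iSup_induction _ (motive := fun w => fdL a w ∈ U') hw ?_ ?_ ?_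
            · rintro j _ ⟨u, hu, rfl⟩
              rcases Nat.lt_or_ge (j + 1 : ℕ) n with hlt | hge
              · refine hcomp ⟨(j : ℕ) + 1, hlt⟩ ⟨u, hu, (pow_succ_apply (fdL a) (j : ℕ) u)⟩
              · have hj1 : (j : ℕ) + 1 = n := le_antisymm j.2 hge
                have heq : fdL a (((fdL a) ^ (j : ℕ)) u) = ((fdL a) ^ ((j : ℕ) + 1)) u :=
                  (pow_succ_apply _ _ _).symm
                rw [hj1] at heq
                rw [heq]
                exact hHU' (hpowU u hu)
            · simpa using (Submodule.zero_mem U')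
            · intro x y hx hy
              rw [map_add]; exact add_mem hx hy
        | cast k =>
            refine Submodule.iSup_induction _ (motive := fun w => L (h k.castSucc) w ∈ U') hw ?_ ?_ ?_
            · rintro j _ ⟨u, hu, rfl⟩
              have hc : (L (h k.castSucc)) * ((fdL a) ^ (j : ℕ)) =
                  ((fdL a) ^ (j : ℕ)) * (L (h k.castSucc)) :=
                ((L_fdL_comm (h k.castSucc) a).pow_right (j : ℕ)).eq
              have heq : L (h k.castSucc) (((fdL a) ^ (j : ℕ)) u) =
                  ((fdL a) ^ (j : ℕ)) (L (h k.castSucc) u) := by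
                rw [← Module.End.mul_apply, hc, Module.End.mul_apply]
              rw [heq]
              exact hcomp j ⟨_, hUinv k ⟨u, hu, rfl⟩, rfl⟩
            · simpa using (Submodule.zero_mem U')
            · intro x y hx hy
              rw [map_add]; exact add_mem hx hy

lemma L_mul (y z : α) : L y * L z = L (y + z) := by
  ext g x
  simp [Module.End.mul_apply, L_apply, add_assoc]

lemma L_zero : L (0 : α) = 1 := by
  ext g x
  simp [L_apply]

lemma subgroup_inv (S : Set α) (U : Submodule ℂ (α → ℂ)) (hFD : FiniteDimensional ℂ U)
    (hS : ∀ y ∈ S, ∀ u ∈ U, L y u ∈ U) :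
    ∀ g ∈ AddSubgroup.closure S, ∀ u ∈ U, L g u ∈ U := by
  intro g hg
  induction hg using AddSubgroup.closure_induction with
  | mem y hy => exact hS y hy
  | zero =>
      intro u hu
      rw [L_zero]
      exact hu
  | add y z hy hz hy' hz' =>
      intro u hu
      have : L (y + z) u = L y (L z u) := by rw [← L_mul, Module.End.mul_apply]
      rw [this]
      exact hy' _ (hz' u hu)
  | neg y hy hy' =>
      intro u hu
      -- restrict L y to U
      have hmapsto : ∀ x ∈ U, L y x ∈ U := hy'
      set e : U →ₗ[ℂ] U := (L y).restrict hmapsto with he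
      have hinj : Function.Injective e := by
        intro x x' hxx'
        have : L y (x : α → ℂ) = L y (x' : α → ℂ) := congrArg Subtype.val hxx'
        have h2 : L (-y) (L y (x : α → ℂ)) = L (-y) (L y (x' : α → ℂ)) := by rw [this]
        rw [← Module.End.mul_apply, ← Module.End.mul_apply, L_mul, neg_add_cancel, L_zero,
          Module.End.one_apply, Module.End.one_apply] at h2
        exact Subtype.ext h2
      have hsurj : Function.Surjective e := (LinearMap.injective_iff_surjective).1 hinj
      obtain ⟨v, hv⟩ := hsurj ⟨u, hu⟩
      have hv' : L y (v : α → ℂ) = u := congrArg Subtype.val hv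
      have : L (-y) u = (v : α → ℂ) := by
        rw [← hv', ← Module.End.mul_apply, L_mul, neg_add_cancel, L_zero, Module.End.one_apply]
      rw [this]
      exact v.2

end Stmt5Aux

open Stmt5Aux in
theorem stmt5 (d t : ℕ) (hd : 0 < d) (ht : 0 < t) (h : Fin t → Fin d → ℝ)
    (hdense : Dense ((AddSubgroup.closure (Set.range h) :
      AddSubgroup (Fin d → ℝ)) : Set (Fin d → ℝ)))
    (f : (Fin d → ℝ) → ℂ) (hf : Continuous f)
    (m : Fin t → ℕ)
    (hmem : ∀ k, ∃ Hk : Submodule ℂ ((Fin d → ℝ) → ℂ),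
      FiniteDimensional ℂ Hk ∧ (∀ g ∈ Hk, Continuous g) ∧
      (∀ y : Fin d → ℝ, ∀ g ∈ Hk, (fun x => g (x + y)) ∈ Hk) ∧
      (fd (h k))^[m k] f ∈ Hk) :
    ∃ Z : Submodule ℂ ((Fin d → ℝ) → ℂ),
      FiniteDimensional ℂ Z ∧ (∀ g ∈ Z, Continuous g) ∧
      (∀ y : Fin d → ℝ, ∀ g ∈ Z, (fun x => g (x + y)) ∈ Z) ∧
      f ∈ Z := by
  classical
  choose Hk hFDk hcontk hinvk hfk using hmem
  set H : Submodule ℂ ((Fin d → ℝ) → ℂ) := ⨆ k, Hk k with hHdef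
  have hFDH : FiniteDimensional ℂ H := by
    have : ∀ k, FiniteDimensional ℂ (Hk k) := hFDk
    exact Submodule.finiteDimensional_iSup Hk
  have hStab : Stab H := by
    intro y g hg
    refine Submodule.iSup_induction Hk (motive := fun g => L y g ∈ H) hg ?_ ?_ ?_
    · intro k g hgk
      exact (le_iSup Hk k) (hinvk k y g hgk)
    · simpa using Submodule.zero_mem H
    · intro a b ha hb
      rw [map_add]; exact add_mem ha hb
  have hm : ∀ k, ((fdL (h k)) ^ (m k)) f ∈ H := by
    intro k
    rw [← iterate_fd]
    exact (le_iSup Hk k) (hfk k)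
  obtain ⟨U, hUFD, hHU, hUle, hfU, hUinv⟩ := aux t h m f H hFDH hStab hm
  -- invariance under the whole subgroup
  have hGinv : ∀ g ∈ AddSubgroup.closure (Set.range h), ∀ u ∈ U, L g u ∈ U := by
    refine subgroup_inv _ U hUFD ?_
    rintro y ⟨k, rfl⟩ u hu
    exact hUinv k ⟨u, hu, rfl⟩
  -- U is closed (f.d. subspace of a Hausdorff TVS)
  have hclosed : IsClosed (U : Set ((Fin d → ℝ) → ℂ)) :=
    U.closed_of_finiteDimensional
  have hcontphi : Continuous (fun y : Fin d → ℝ => L y f) := by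
    refine continuous_pi fun x => ?_
    exact hf.comp (continuous_const.add continuous_id)
  have hall : ∀ y : Fin d → ℝ, L y f ∈ U := by
    have hsub : ((AddSubgroup.closure (Set.range h) : AddSubgroup (Fin d → ℝ)) :
        Set (Fin d → ℝ)) ⊆ {y | L y f ∈ U} := fun g hg => hGinv g hg f hfU
    have hcl : IsClosed {y : Fin d → ℝ | L y f ∈ U} := hclosed.preimage hcontphi
    intro y
    exact closure_minimal hsub hcl (hdense y)
  -- final space: span of all translates of f
  refine ⟨Submodule.span ℂ (Set.range fun y : Fin d → ℝ => L y f), ?_, ?_, ?_, ?_⟩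
  · refine Submodule.finiteDimensional_of_le (S₂ := U) ?_
    rw [Submodule.span_le]
    rintro _ ⟨y, rfl⟩
    exact hall y
  · -- continuity
    set C : Submodule ℂ ((Fin d → ℝ) → ℂ) :=
      { carrier := {g | Continuous g}
        add_mem' := fun ha hb => ha.add hb
        zero_mem' := continuous_const
        smul_mem' := fun c g hg => show Continuous fun x => c • g x from hg.const_smul c } with hC
    intro g hg
    have : g ∈ C := by
      refine (Submodule.span_le.2 ?_) hg
      rintro _ ⟨y, rfl⟩
      exact hf.comp (continuous_id.add continuous_const)
    exact this
  · -- translation invariance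
    intro y g hg
    have : (Submodule.span ℂ (Set.range fun z : Fin d → ℝ => L z f)).map (L y) ≤
        Submodule.span ℂ (Set.range fun z : Fin d → ℝ => L z f) := by
      rw [Submodule.map_span, Submodule.span_le]
      rintro _ ⟨_, ⟨z, rfl⟩, rfl⟩
      have : L y (L z f) = L (y + z) f := by rw [← Module.End.mul_apply, Stmt5Aux.L_mul]
      rw [this]
      exact Submodule.subset_span ⟨y + z, rfl⟩
    exact this ⟨g, hg, rfl⟩
  · have h0 : L (0 : Fin d → ℝ) f ∈
        Submodule.span ℂ (Set.range fun y : Fin d → ℝ => L y f) :=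
      Submodule.subset_span ⟨0, rfl⟩
    have he : L (0 : Fin d → ℝ) f = f := by rw [Stmt5Aux.L_zero]; rfl
    rwa [he] at h0
end

section
/- Let h > 0 be a real number and let g : ℝ → ℂ be a continuous function such that g(kh) = 0 for every integer k. Then there exists a continuous function f : ℝ → ℂ such that f(kh) = 0 for every integer k and Δ_h f = g, i.e. f(x+h) − f(x) = g(x) for all x ∈ ℝ. -/
/-- Partial sums of `g` along the lattice. -/
noncomputable def stmt7F (g : ℝ → ℂ) (h : ℝ) : ℤ → ℝ → ℂ
  | Int.ofNat m => fun x => ∑ j ∈ Finset.range m, g (x - (j + 1) * h)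
  | Int.negSucc m => fun x => -∑ j ∈ Finset.range (m + 1), g (x + j * h)

lemma stmt7F_rec (g : ℝ → ℂ) (h : ℝ) (n : ℤ) (x : ℝ) :
    stmt7F g h (n + 1) x = stmt7F g h n x + g (x - (n + 1) * h) := by
  cases n with
  | ofNat m =>
      show stmt7F g h (Int.ofNat (m + 1)) x = _
      simp [stmt7F, Finset.sum_range_succ]
  | negSucc m =>
      cases m with
      | zero =>
          show stmt7F g h (Int.ofNat 0) x = _
          simp [stmt7F]
      | succ m =>
          show stmt7F g h (Int.negSucc m) x = _
          simp [stmt7F, Finset.sum_range_succ, mul_comm]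
          ring_nf

lemma stmt7F_shift (g : ℝ → ℂ) (h : ℝ) (n : ℤ) (x : ℝ) :
    stmt7F g h n (x + h) = stmt7F g h n x + g x - g (x - n * h) := by
  induction n using Int.induction_on with
  | zero => simp [stmt7F]
  | succ n ih =>
      rw [stmt7F_rec, stmt7F_rec, ih]
      push_cast
      ring_nf
  | pred n ih =>
      have r1 : stmt7F g h (-(n:ℤ) - 1) (x + h)
          = stmt7F g h (-(n:ℤ)) (x + h) - g (x + h - (-(n:ℤ) - 1 + 1) * h) := by
        have := stmt7F_rec g h (-(n:ℤ) - 1) (x + h)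
        rw [sub_add_cancel] at this
        rw [this]; push_cast; ring_nf
      have r2 : stmt7F g h (-(n:ℤ) - 1) x
          = stmt7F g h (-(n:ℤ)) x - g (x - (-(n:ℤ) - 1 + 1) * h) := by
        have := stmt7F_rec g h (-(n:ℤ) - 1) x
        rw [sub_add_cancel] at this
        rw [this]; push_cast; ring_nf
      rw [r1, r2, ih]
      push_cast
      ring_nf

lemma stmt7F_cont (g : ℝ → ℂ) (hg : Continuous g) (h : ℝ) (n : ℤ) :
    Continuous (stmt7F g h n) := by
  cases n with
  | ofNat m =>
      show Continuous fun x => ∑ j ∈ Finset.range m, g (x - (j + 1) * h)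
      exact continuous_finset_sum _ fun j _ => hg.comp (by continuity)
  | negSucc m =>
      show Continuous fun x => -∑ j ∈ Finset.range (m + 1), g (x + j * h)
      exact (continuous_finset_sum _ fun j _ => hg.comp (by continuity)).neg

lemma stmt7F_zero (g : ℝ → ℂ) (h : ℝ) (hgz : ∀ k : ℤ, g (k * h) = 0) (n : ℤ) :
    stmt7F g h n ((n : ℝ) * h) = 0 := by
  cases n with
  | ofNat m =>
      show (∑ j ∈ Finset.range m, g ((Int.ofNat m : ℝ) * h - (j + 1) * h)) = 0
      refine Finset.sum_eq_zero fun j _ => ?_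
      have e : (Int.ofNat m : ℝ) * h - (j + 1) * h = ((m - j - 1 : ℤ) : ℝ) * h := by
        push_cast [Int.ofNat_eq_coe]; ring
      rw [e]; exact hgz _
  | negSucc m =>
      show -(∑ j ∈ Finset.range (m + 1), g ((Int.negSucc m : ℝ) * h + j * h)) = 0
      rw [neg_eq_zero]
      refine Finset.sum_eq_zero fun j _ => ?_
      have e : (Int.negSucc m : ℝ) * h + j * h = ((j - (m + 1) : ℤ) : ℝ) * h := by
        push_cast [Int.cast_negSucc]; ring
      rw [e]; exact hgz _

theorem stmt7 (h : ℝ) (hh : 0 < h) (g : ℝ → ℂ) (hg : Continuous g)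
    (hgz : ∀ k : ℤ, g (k * h) = 0) :
    ∃ f : ℝ → ℂ, Continuous f ∧ (∀ k : ℤ, f (k * h) = 0) ∧ fd h f = g := by
  -- floor characterization
  have hfl : ∀ (n : ℤ) (y : ℝ), (n : ℝ) * h ≤ y → y < (n + 1 : ℝ) * h → ⌊y / h⌋ = n := by
    intro n y h1 h2
    rw [Int.floor_eq_iff]
    constructor
    · exact (le_div_iff₀ hh).mpr (by linarith)
    · rw [div_lt_iff₀ hh]; linarith
  have hfloor_self : ∀ x : ℝ, (⌊x / h⌋ : ℝ) * h ≤ x := by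
    intro x
    have := Int.floor_le (x / h)
    calc ((⌊x / h⌋ : ℝ)) * h ≤ (x / h) * h := by nlinarith
      _ = x := by field_simp
  have hfloor_lt : ∀ x : ℝ, x < ((⌊x / h⌋ : ℝ) + 1) * h := by
    intro x
    have := Int.lt_floor_add_one (x / h)
    nlinarith [div_mul_cancel₀ x (ne_of_gt hh)]
  have hg0 : g 0 = 0 := by have := hgz 0; simpa using this
  refine ⟨fun x => stmt7F g h ⌊x / h⌋ x, ?_, ?_, ?_⟩
  · -- continuity
    rw [continuous_iff_continuousAt]
    intro x
    set n := ⌊x / h⌋ with hn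
    by_cases hx : x = (n : ℝ) * h
    · -- lattice point: glue left/right
      have hFn1 : stmt7F g h n x = stmt7F g h (n - 1) x := by
        have h1 := stmt7F_rec g h (n - 1) x
        rw [sub_add_cancel] at h1
        have e : x - (((n - 1 : ℤ) : ℝ) + 1) * h = 0 := by rw [hx]; push_cast; ring
        rw [e, hg0, add_zero] at h1
        exact h1
      rw [ContinuousAt, ← nhdsLE_sup_nhdsGE, Filter.tendsto_sup]
      constructor
      · -- left
        have hcw : ContinuousWithinAt (stmt7F g h (n - 1)) (Set.Iic x) x :=
          ((stmt7F_cont g hg h (n - 1)).continuousAt).continuousWithinAt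
        have heq : (fun x => stmt7F g h ⌊x / h⌋ x) =ᶠ[nhdsWithin x (Set.Iic x)]
            stmt7F g h (n - 1) := by
          have hmem : Set.Ioc (((n : ℝ) - 1) * h) x ∈ nhdsWithin x (Set.Iic x) := by
            rw [← Set.Ioi_inter_Iic]
            exact Filter.inter_mem
              (mem_nhdsWithin_of_mem_nhds (Ioi_mem_nhds (by rw [hx]; nlinarith)))
              self_mem_nhdsWithin
          filter_upwards [hmem] with y hy
          rcases hy.2.eq_or_lt with heq2 | hlt
          · rw [heq2, ← hn, hFn1]
          · have hfy : ⌊y / h⌋ = n - 1 := by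
              apply hfl
              · push_cast; linarith [hy.1]
              · push_cast; rw [hx] at hlt; linarith
            rw [hfy]
        refine hcw.congr_of_eventuallyEq heq ?_
        show stmt7F g h n x = _
        rw [hFn1]
      · -- right
        have hcw : ContinuousWithinAt (stmt7F g h n) (Set.Ici x) x :=
          ((stmt7F_cont g hg h n).continuousAt).continuousWithinAt
        have heq : (fun x => stmt7F g h ⌊x / h⌋ x) =ᶠ[nhdsWithin x (Set.Ici x)]
            stmt7F g h n := by
          have hmem : Set.Ico x (((n : ℝ) + 1) * h) ∈ nhdsWithin x (Set.Ici x) := by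
            rw [← Set.Ici_inter_Iio]
            exact Filter.inter_mem self_mem_nhdsWithin
              (mem_nhdsWithin_of_mem_nhds (Iio_mem_nhds (hfloor_lt x)))
          filter_upwards [hmem] with y hy
          have hfy : ⌊y / h⌋ = n := by
            apply hfl
            · rw [← hx]; exact hy.1
            · exact hy.2
          rw [hfy]
        exact hcw.congr_of_eventuallyEq heq rfl
    · -- interior point: floor locally constant
      have hlt : (n : ℝ) * h < x := lt_of_le_of_ne (hfloor_self x) (Ne.symm hx)
      have heq : (fun x => stmt7F g h ⌊x / h⌋ x) =ᶠ[nhds x] stmt7F g h n := by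
        have hmem : Set.Ioo ((n : ℝ) * h) (((n : ℝ) + 1) * h) ∈ nhds x :=
          Ioo_mem_nhds hlt (hfloor_lt x)
        filter_upwards [hmem] with y hy
        have hfy : ⌊y / h⌋ = n := hfl n y hy.1.le hy.2
        rw [hfy]
      exact ((stmt7F_cont g hg h n).continuousAt).congr heq.symm
  · -- vanishes on lattice
    intro k
    have hfk : ⌊((k : ℝ) * h) / h⌋ = k := by
      rw [mul_div_assoc, div_self (ne_of_gt hh), mul_one, Int.floor_intCast]
    show stmt7F g h ⌊((k : ℝ) * h) / h⌋ ((k : ℝ) * h) = 0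
    rw [hfk]
    exact stmt7F_zero g h hgz k
  · -- forward difference
    funext x
    set n := ⌊x / h⌋ with hn
    have hfl2 : ⌊(x + h) / h⌋ = n + 1 := by
      apply hfl
      · push_cast; linarith [hfloor_self x]
      · push_cast; linarith [hfloor_lt x]
    show stmt7F g h ⌊(x + h) / h⌋ (x + h) - stmt7F g h n x = g x
    rw [hfl2, stmt7F_rec, stmt7F_shift]
    ring_nf
end

section
/- Let h > 0 be a real number and let g : ℝ → ℂ be a continuous function such that g(kh) = 0 for every integer k. Then for every natural number m ≥ 1 there exists a continuous function F_m : ℝ → ℂ such that F_m(kh) = 0 for every integer k and Δ_h^m F_m = g. -/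
section step

variable (h : ℝ) (g : ℝ → ℂ)

/-- Partial-sum helper: candidate value of the antidifference when `⌊x/h⌋ = n`. -/
noncomputable def Sfun (n : ℤ) (x : ℝ) : ℂ :=
  (∑ j ∈ Finset.range n.toNat, g (x - (j + 1) * h)) -
    ∑ j ∈ Finset.range (-n).toNat, g (x + j * h)

lemma Sfun_zero (x : ℝ) : Sfun h g 0 x = 0 := by simp [Sfun]

lemma Sfun_succ (n : ℤ) (x : ℝ) :
    Sfun h g (n + 1) x = Sfun h g n x + g (x - ((n : ℝ) + 1) * h) := by
  rcases le_or_gt 0 n with hn | hn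
  · have h1 : (n + 1).toNat = n.toNat + 1 := by omega
    have h4 : ((n.toNat : ℝ)) = (n : ℝ) := by
      exact_mod_cast congrArg (Int.cast : ℤ → ℝ) (Int.toNat_of_nonneg hn)
    unfold Sfun
    rw [h1, Finset.sum_range_succ, show (-(n+1)).toNat = 0 by omega,
      show (-n).toNat = 0 by omega, h4]
    simp only [Finset.range_zero, Finset.sum_empty]
    ring
  · have h3 : (-n).toNat = (-(n + 1)).toNat + 1 := by omega
    have h4 : (((-(n + 1)).toNat : ℝ)) = ((-(n + 1) : ℤ) : ℝ) := by
      exact_mod_cast congrArg (Int.cast : ℤ → ℝ) (Int.toNat_of_nonneg (by omega))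
    have e : x + ((-(n + 1)).toNat : ℝ) * h = x - ((n : ℝ) + 1) * h := by
      rw [h4]; push_cast; ring
    unfold Sfun
    rw [h3, Finset.sum_range_succ, show (n+1).toNat = 0 by omega,
      show n.toNat = 0 by omega, e]
    simp only [Finset.range_zero, Finset.sum_empty]
    ring

lemma Sfun_cont (hg : Continuous g) (n : ℤ) : Continuous (Sfun h g n) := by
  unfold Sfun
  apply Continuous.sub <;>
  · apply continuous_finset_sum
    intro j _
    exact hg.comp (by continuity)

lemma Sfun_key (n : ℤ) (x : ℝ) : Sfun h g (n + 1) (x + h) = Sfun h g n x + g x := by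
  induction n using Int.induction_on with
  | zero =>
      rw [Sfun_succ, Sfun_zero, Sfun_zero]
      norm_num
  | succ k ih =>
      have a := Sfun_succ h g ((k : ℤ) + 1) (x + h)
      have b := Sfun_succ h g (k : ℤ) x
      have e : x + h - (((((k : ℤ) + 1) : ℤ) : ℝ) + 1) * h = x - (((k : ℤ) : ℝ) + 1) * h := by
        push_cast; ring
      rw [e] at a
      linear_combination a + ih - b
  | pred k ih =>
      have a := Sfun_succ h g (-(k : ℤ)) (x + h)
      have b := Sfun_succ h g (-(k : ℤ) - 1) x
      have hk : -(k : ℤ) - 1 + 1 = -(k : ℤ) := by ring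
      rw [hk] at b ⊢
      have e : x + h - (((-(k : ℤ) : ℤ) : ℝ) + 1) * h = x - (((-(k : ℤ) - 1 : ℤ) : ℝ) + 1) * h := by
        push_cast; ring
      rw [e] at a
      linear_combination ih - a + b

end step

theorem stmt8 (h : ℝ) (hh : 0 < h) (g : ℝ → ℂ) (hg : Continuous g)
    (hgz : ∀ k : ℤ, g (k * h) = 0) (m : ℕ) (hm : 1 ≤ m) :
    ∃ F : ℝ → ℂ, Continuous F ∧ (∀ k : ℤ, F (k * h) = 0) ∧ (fd h)^[m] F = g := by
  clear hm
  induction m generalizing g with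
  | zero => exact ⟨g, hg, hgz, rfl⟩
  | succ m ih =>
      -- one-step antidifference
      obtain ⟨F₁, hF₁c, hF₁z, hF₁d⟩ :
          ∃ F₁ : ℝ → ℂ, Continuous F₁ ∧ (∀ k : ℤ, F₁ (k * h) = 0) ∧ fd h F₁ = g := by
        set F : ℝ → ℂ := fun x => Sfun h g ⌊x / h⌋ x with hF
        have floor_eq : ∀ (n : ℤ) (y : ℝ), n * h ≤ y → y < (n + 1) * h → ⌊y / h⌋ = n := by
          intro n y h1 h2
          rw [Int.floor_eq_iff]
          constructor
          · rw [le_div_iff₀ hh]; exact h1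
          · rw [div_lt_iff₀ hh]; push_cast; exact h2
        have hzero : ∀ k : ℤ, F (k * h) = 0 := by
          intro k
          have hk : ⌊((k : ℝ) * h) / h⌋ = k := by
            rw [mul_div_assoc, div_self hh.ne', mul_one, Int.floor_intCast]
          simp only [hF, hk, Sfun]
          have A : (∑ j ∈ Finset.range k.toNat, g ((k : ℝ) * h - ((j : ℝ) + 1) * h)) = 0 := by
            apply Finset.sum_eq_zero
            intro j _
            have e : (k : ℝ) * h - ((j : ℝ) + 1) * h = ((k - (j + 1) : ℤ) : ℝ) * h := by
              push_cast; ring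
            rw [e, hgz]
          have B : (∑ j ∈ Finset.range (-k).toNat, g ((k : ℝ) * h + (j : ℝ) * h)) = 0 := by
            apply Finset.sum_eq_zero
            intro j _
            have e : (k : ℝ) * h + (j : ℝ) * h = ((k + j : ℤ) : ℝ) * h := by push_cast; ring
            rw [e, hgz]
          rw [A, B, sub_zero]
        have hdiff : fd h F = g := by
          funext x
          have hfx : ⌊(x + h) / h⌋ = ⌊x / h⌋ + 1 := by
            have e : (x + h) / h = x / h + 1 := by field_simp
            rw [e, Int.floor_add_one]
          simp only [fd, hF, hfx]
          rw [Sfun_key]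
          ring
        have hcont : Continuous F := by
          rw [continuous_iff_continuousAt]
          intro x
          set n : ℤ := ⌊x / h⌋ with hn
          have hx1 : (n : ℝ) * h ≤ x := by
            rw [← le_div_iff₀ hh]; exact Int.floor_le _
          have hx2 : x < ((n : ℝ) + 1) * h := by
            have := Int.lt_floor_add_one (x / h)
            rw [← div_lt_iff₀ hh]
            push_cast
            exact this
          rcases eq_or_lt_of_le hx1 with hlat | hlt
          · -- lattice point: x = n * h
            have hFx : F x = 0 := by
              rw [show x = (n : ℝ) * h from hlat.symm]; exact hzero n
            rw [ContinuousAt, hFx]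
            have hb : Filter.Tendsto (fun y => ‖Sfun h g n y‖ + ‖g (y - (n : ℝ) * h)‖)
                (nhds x) (nhds 0) := by
              have c1 : Filter.Tendsto (fun y => ‖Sfun h g n y‖) (nhds x) (nhds ‖Sfun h g n x‖) :=
                ((Sfun_cont h g hg n).norm).tendsto x
              have c2 : Filter.Tendsto (fun y => ‖g (y - (n : ℝ) * h)‖) (nhds x)
                  (nhds ‖g (x - (n : ℝ) * h)‖) :=
                ((hg.comp (continuous_id.sub continuous_const)).norm).tendsto x
              have e1 : ‖Sfun h g n x‖ = 0 := by
                have e : Sfun h g n x = F x := rfl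
                rw [e, hFx, norm_zero]
              have e2 : ‖g (x - (n : ℝ) * h)‖ = 0 := by
                rw [show x = (n : ℝ) * h from hlat.symm]
                simp only [sub_self]
                have e0 := hgz 0
                simp only [Int.cast_zero, zero_mul] at e0
                rw [e0, norm_zero]
              have hsum := c1.add c2
              rw [e1, e2, add_zero] at hsum
              exact hsum
            apply squeeze_zero_norm' _ hb
            have hmem : Set.Ioo (((n : ℝ) - 1) * h) (((n : ℝ) + 1) * h) ∈ nhds x := by
              apply Ioo_mem_nhds _ hx2
              nlinarith
            filter_upwards [hmem] with y hy
            rcases le_or_gt ((n : ℝ) * h) y with hge | hltr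
            · have hfl : ⌊y / h⌋ = n := floor_eq n y hge (by exact_mod_cast hy.2)
              have eF : F y = Sfun h g n y := by simp only [hF, hfl]
              rw [eF]
              exact le_add_of_nonneg_right (norm_nonneg _)
            · have hfl : ⌊y / h⌋ = n - 1 := by
                apply floor_eq
                · push_cast; nlinarith [hy.1]
                · push_cast; nlinarith
              have hsucc := Sfun_succ h g (n - 1) y
              rw [show (n : ℤ) - 1 + 1 = n by ring] at hsucc
              have eg : y - ((((n : ℤ) - 1 : ℤ) : ℝ) + 1) * h = y - (n : ℝ) * h := by
                push_cast; ring
              rw [eg] at hsucc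
              have eF : F y = Sfun h g n y - g (y - (n : ℝ) * h) := by
                simp only [hF, hfl]
                linear_combination -hsucc
              rw [eF]
              exact norm_sub_le _ _
          · -- non-lattice: F agrees with Sfun h g n on a neighborhood
            have hev : F =ᶠ[nhds x] Sfun h g n := by
              have hmem : Set.Ioo ((n : ℝ) * h) (((n : ℝ) + 1) * h) ∈ nhds x :=
                Ioo_mem_nhds hlt hx2
              filter_upwards [hmem] with y hy
              have hfl : ⌊y / h⌋ = n := floor_eq n y hy.1.le (by exact_mod_cast hy.2)
              simp only [hF, hfl]
            exact ((Sfun_cont h g hg n).continuousAt).congr hev.symm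
        exact ⟨F, hcont, hzero, hdiff⟩
      obtain ⟨F, hFc, hFz, hFd⟩ := ih F₁ hF₁c hF₁z
      refine ⟨F, hFc, hFz, ?_⟩
      rw [Function.iterate_succ_apply', hFd, hF₁d]
end

section
/- Let h_1, h_2 > 0 be real numbers with h_1/h_2 ∈ ℚ and let m ≥ 1 be a natural number. Then there exists a continuous function f : ℝ → ℂ such that Δ_{h_1}^m f = 0 and Δ_{h_2}^m f = 0, but f is not a continuous exponential polynomial on ℝ (equivalently, f does not belong to any finite-dimensional translation-invariant subspace of C(ℝ, ℂ)). -/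
/-- `f : ℝ → ℂ` is a continuous exponential polynomial on `ℝ`:
`f x = ∑ j, p j (x) * exp (λ_j * x)` with complex polynomials `p j` and `λ_j ∈ ℂ`. -/
def IsExpPoly1 (f : ℝ → ℂ) : Prop :=
  ∃ (n : ℕ) (p : Fin n → Polynomial ℂ) (lam : Fin n → ℂ),
    ∀ x : ℝ, f x = ∑ j, (p j).eval (x : ℂ) * Complex.exp (lam j * (x : ℂ))

open Real Filter Function

lemma fd_zero (h : ℝ) : fd h (0 : ℝ → ℂ) = 0 := by
  funext x; simp [fd]

lemma fd_iter_zero (h : ℝ) (m : ℕ) : (fd h)^[m] (0 : ℝ → ℂ) = 0 := by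
  induction m with
  | zero => rfl
  | succ k ih => rw [Function.iterate_succ_apply, fd_zero, ih]

lemma expPoly_differentiable {f : ℝ → ℂ} (hf : IsExpPoly1 f) : Differentiable ℝ f := by
  obtain ⟨n, p, lam, hf⟩ := hf
  have : f = fun x : ℝ => ∑ j, (p j).eval (x : ℂ) * Complex.exp (lam j * (x : ℂ)) :=
    funext hf
  rw [this]
  apply Differentiable.fun_sum
  intro j _
  apply Differentiable.mul
  · have h1 : Differentiable ℝ fun z : ℂ => (p j).eval z :=
      Differentiable.restrictScalars ℝ (𝕜' := ℂ) (p j).differentiable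
    exact h1.comp Complex.ofRealCLM.differentiable
  · have h2 : Differentiable ℝ Complex.exp := Differentiable.restrictScalars ℝ (𝕜' := ℂ) Complex.differentiable_exp
    exact h2.comp
      ((differentiable_const _).mul Complex.ofRealCLM.differentiable)

lemma not_diff_abs_sin {d : ℝ} (hd : 0 < d) :
    ¬ DifferentiableAt ℝ (fun x : ℝ => |Real.sin (π * x / d)|) 0 := by
  intro hdiff
  set g : ℝ → ℝ := fun x => |Real.sin (π * x / d)| with hg
  set s : ℝ → ℝ := fun x => Real.sin (π * x / d) with hs
  have hsder : HasDerivAt s (π / d) 0 := by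
    have h1 : HasDerivAt (fun x : ℝ => π * x / d) (π / d) 0 := by
      simpa using ((hasDerivAt_id (0:ℝ)).const_mul π).div_const d
    have h2 := (Real.hasDerivAt_sin (π * 0 / d)).comp 0 h1
    have h3 : Real.cos (π * 0 / d) * (π / d) = π / d := by simp
    rw [h3] at h2
    exact h2
  have hslope_s : Tendsto (slope s 0) (nhdsWithin 0 {(0:ℝ)}ᶜ) (nhds (π / d)) :=
    hasDerivAt_iff_tendsto_slope.mp hsder
  have hgder := hdiff.hasDerivAt
  set c := deriv (fun x : ℝ => |Real.sin (π * x / d)|) 0 with hc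
  have hslope_g : Tendsto (slope g 0) (nhdsWithin 0 {(0:ℝ)}ᶜ) (nhds c) :=
    hasDerivAt_iff_tendsto_slope.mp hgder
  have hg0 : g 0 = 0 := by simp [hg]
  have hs0 : s 0 = 0 := by simp [hs]
  -- on the right, g = s eventually
  have hle_r : nhdsWithin (0:ℝ) (Set.Ioi 0) ≤ nhdsWithin 0 {(0:ℝ)}ᶜ :=
    nhdsWithin_mono 0 (fun x hx => ne_of_gt hx)
  have hle_l : nhdsWithin (0:ℝ) (Set.Iio 0) ≤ nhdsWithin 0 {(0:ℝ)}ᶜ :=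
    nhdsWithin_mono 0 (fun x hx => ne_of_lt hx)
  have heq_r : slope g 0 =ᶠ[nhdsWithin (0:ℝ) (Set.Ioi 0)] slope s 0 := by
    have hev : ∀ᶠ x in nhdsWithin (0:ℝ) (Set.Ioi 0), x ∈ Set.Ioo 0 d :=
      Ioo_mem_nhdsGT_of_mem ⟨le_refl 0, hd⟩
    filter_upwards [hev] with x hx
    have h0 : 0 ≤ π * x / d := div_nonneg (by nlinarith [Real.pi_pos, hx.1]) hd.le
    have h1 : π * x / d ≤ π := by
      rw [div_le_iff₀ hd]
      nlinarith [Real.pi_pos, hx.2]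
    have heqa : g x = s x := abs_of_nonneg (Real.sin_nonneg_of_nonneg_of_le_pi h0 h1)
    rw [slope_def_field, slope_def_field, heqa, hg0, hs0]
  have heq_l : slope g 0 =ᶠ[nhdsWithin (0:ℝ) (Set.Iio 0)] (fun x => -slope s 0 x) := by
    have hev : ∀ᶠ x in nhdsWithin (0:ℝ) (Set.Iio 0), x ∈ Set.Ioo (-d) 0 :=
      Ioo_mem_nhdsLT_of_mem ⟨neg_lt_zero.mpr hd, le_refl 0⟩
    filter_upwards [hev] with x hx
    have h1 : s x ≤ 0 := by
      have hy0 : 0 ≤ π * (-x) / d := div_nonneg (by nlinarith [Real.pi_pos, hx.2]) hd.le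
      have hy1 : π * (-x) / d ≤ π := by
        rw [div_le_iff₀ hd]
        nlinarith [Real.pi_pos, hx.1]
      have hnn := Real.sin_nonneg_of_nonneg_of_le_pi hy0 hy1
      have heq2 : π * (-x) / d = -(π * x / d) := by ring
      rw [heq2, Real.sin_neg] at hnn
      simp only [hs]
      linarith
    have heqa : g x = -s x := abs_of_nonpos h1
    rw [slope_def_field, slope_def_field, heqa, hg0, hs0]
    ring
  have hr : Tendsto (slope g 0) (nhdsWithin (0:ℝ) (Set.Ioi 0)) (nhds (π / d)) :=
    (hslope_s.mono_left hle_r).congr' heq_r.symm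
  have hl : Tendsto (slope g 0) (nhdsWithin (0:ℝ) (Set.Iio 0)) (nhds (-(π / d))) :=
    ((hslope_s.mono_left hle_l).neg).congr' heq_l.symm
  have hcr : c = π / d :=
    tendsto_nhds_unique (hslope_g.mono_left hle_r) hr
  have hcl : c = -(π / d) :=
    tendsto_nhds_unique (hslope_g.mono_left hle_l) hl
  have : π / d = 0 := by linarith [hcr ▸ hcl]
  have := Real.pi_pos
  have : π / d > 0 := by positivity
  linarith

theorem stmt9 (h₁ h₂ : ℝ) (hh₁ : 0 < h₁) (hh₂ : 0 < h₂)
    (hq : ∃ q : ℚ, (q : ℝ) = h₁ / h₂) (m : ℕ) (hm : 1 ≤ m) :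
    ∃ f : ℝ → ℂ, Continuous f ∧ (fd h₁)^[m] f = 0 ∧ (fd h₂)^[m] f = 0 ∧
      ¬ IsExpPoly1 f := by
  obtain ⟨q, hqe⟩ := hq
  have hqpos : (0:ℝ) < (q:ℝ) := hqe ▸ div_pos hh₁ hh₂
  have hq0 : 0 < q := by exact_mod_cast hqpos
  set a : ℕ := q.num.toNat with ha
  set b : ℕ := q.den with hb
  have hbpos : 0 < (b:ℝ) := by exact_mod_cast q.pos
  have hapos : 0 < q.num := Rat.num_pos.mpr hq0
  have hacast : (a : ℝ) = (q.num : ℝ) := by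
    rw [ha]; exact_mod_cast Int.toNat_of_nonneg hapos.le
  set d : ℝ := h₂ / b with hd
  have hdpos : 0 < d := div_pos hh₂ hbpos
  have hbd : h₂ = (b:ℝ) * d := by rw [hd]; field_simp
  have had : h₁ = (a:ℝ) * d := by
    have h1 : h₁ = (q:ℝ) * h₂ := by
      field_simp at hqe
      linarith [hqe]
    rw [h1, Rat.cast_def, hd, hacast]
    field_simp
    exact_mod_cast hb
  set g : ℝ → ℝ := fun x => |Real.sin (π * x / d)| with hg
  set f : ℝ → ℂ := fun x => (g x : ℂ) with hf
  have hper : Function.Periodic f d := by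
    intro x
    have : π * (x + d) / d = π * x / d + π := by field_simp
    simp only [hf, hg, this, Real.sin_add_pi, abs_neg]
  have hcont : Continuous f := by
    apply Complex.continuous_ofReal.comp
    exact continuous_abs.comp (Real.continuous_sin.comp ((continuous_const.mul continuous_id).div_const d))
  have key : ∀ (h : ℝ), Function.Periodic f h → (fd h)^[m] f = 0 := by
    intro h hp
    obtain ⟨k, rfl⟩ := Nat.exists_eq_add_of_le hm
    rw [add_comm, Function.iterate_succ_apply]
    have : fd h f = 0 := by
      funext x; simp [fd, hp x]
    rw [this, fd_iter_zero]
  refine ⟨f, hcont, ?_, ?_, ?_⟩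
  · exact key h₁ (had ▸ hper.nat_mul a)
  · exact key h₂ (hbd ▸ hper.nat_mul b)
  · intro hexp
    have hdf : DifferentiableAt ℝ f 0 := (expPoly_differentiable hexp) 0
    have hgre : DifferentiableAt ℝ g 0 := by
      have : g = fun x => (f x).re := by
        funext x; simp only [hf, Complex.ofReal_re]
      rw [this]
      exact Complex.reCLM.differentiableAt.comp 0 hdf
    exact not_diff_abs_sin hdpos hgre
end
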